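/- Let ρ > 0. For every x ∈ ℝⁿ with ‖x‖_∞ ≤ √(2/ρ), the zero vector belongs to prox_{(1/ρ)h₂}(x). -/

import Mathlib

/-- The ℓ₁ norm on `ℝⁿ`. -/
noncomputable def l1norm {n : ℕ} (x : Fin n → ℝ) : ℝ := ∑ i, |x i|

/-- The ℓ₂ norm on `ℝⁿ`. -/
noncomputable def l2norm {n : ℕ} (x : Fin n → ℝ) : ℝ := Real.sqrt (∑ i, (x i) ^ 2)

-- `h₂(x) = (‖x‖₁/‖x‖₂)²` for `x ≠ 0`, and `h₂(0) = 0`.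
open Classical in
noncomputable def h2 {n : ℕ} (x : Fin n → ℝ) : ℝ :=
  if x = 0 then 0 else (l1norm x / l2norm x) ^ 2

/-- `prox_{(1/ρ) f}(z)`: the set of global minimizers of `(ρ/2)‖u - z‖₂² + f(u)`. -/
noncomputable def proxSet {n : ℕ} (ρ : ℝ) (f : (Fin n → ℝ) → ℝ) (z : Fin n → ℝ) :
    Set (Fin n → ℝ) :=
  {u | ∀ v : Fin n → ℝ,
    ρ / 2 * (∑ i, (u i - z i) ^ 2) + f u ≤ ρ / 2 * (∑ i, (v i - z i) ^ 2) + f v}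

theorem stmt_11 {n : ℕ} (ρ : ℝ) (hρ : 0 < ρ) (x : Fin n → ℝ)
    (hx : ∀ i, |x i| ≤ Real.sqrt (2 / ρ)) :
    (0 : Fin n → ℝ) ∈ proxSet ρ h2 x := by
  intro v
  simp only [h2, if_pos rfl, eq_self_iff_true, if_true, Pi.zero_apply, zero_sub, neg_sq,
    add_zero]
  by_cases hv : v = 0
  · subst hv; simp
  · rw [if_neg hv]
    set a := l1norm v with ha
    set b := l2norm v with hbdef
    have hsum : 0 < ∑ i, (v i)^2 := by
      obtain ⟨j, hj⟩ := Function.ne_iff.mp hv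
      exact Finset.sum_pos' (fun i _ => sq_nonneg _)
        ⟨j, Finset.mem_univ j, pow_two_pos_of_ne_zero hj⟩
    have hb : 0 < b := Real.sqrt_pos.mpr hsum
    have hb2 : b^2 = ∑ i, (v i)^2 := Real.sq_sqrt hsum.le
    have hvx : ∑ i, v i * x i ≤ Real.sqrt (2/ρ) * a := by
      calc ∑ i, v i * x i ≤ ∑ i, |v i| * Real.sqrt (2/ρ) := by
            refine Finset.sum_le_sum fun i _ => ?_
            calc v i * x i ≤ |v i * x i| := le_abs_self _
              _ = |v i| * |x i| := abs_mul _ _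
              _ ≤ |v i| * Real.sqrt (2/ρ) :=
                  mul_le_mul_of_nonneg_left (hx i) (abs_nonneg _)
        _ = Real.sqrt (2/ρ) * a := by rw [← Finset.sum_mul, ha, l1norm, mul_comm]
    set s := Real.sqrt (ρ/2) with hsdef
    have hs2 : s^2 = ρ/2 := Real.sq_sqrt (by positivity)
    have hs : 0 < s := Real.sqrt_pos.mpr (by positivity)
    have e1 : ρ * Real.sqrt (2/ρ) = Real.sqrt (2*ρ) := by
      rw [show (2:ℝ)*ρ = ρ^2 * (2/ρ) by field_simp,
        Real.sqrt_mul (sq_nonneg ρ), Real.sqrt_sq hρ.le]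
    have e2 : 2 * s = Real.sqrt (2*ρ) := by
      rw [hsdef, show (2:ℝ)*ρ = 4 * (ρ/2) by ring,
        Real.sqrt_mul (by norm_num : (0:ℝ) ≤ 4),
        show (4:ℝ) = 2^2 by norm_num, Real.sqrt_sq (by norm_num : (0:ℝ) ≤ 2)]
    have hsr : ρ * Real.sqrt (2/ρ) = 2 * s := by rw [e1, e2]
    set q := a / b with hqdef
    have hq : q * b = a := div_mul_cancel₀ a hb.ne'
    have expand : ∑ i, (v i - x i)^2
        = ∑ i, (v i)^2 - 2 * ∑ i, v i * x i + ∑ i, (x i)^2 := by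
      have h : ∀ i ∈ Finset.univ, (v i - x i)^2
          = ((v i)^2 - 2*(v i * x i)) + (x i)^2 := fun i _ => by ring
      rw [Finset.sum_congr rfl h, Finset.sum_add_distrib, Finset.sum_sub_distrib,
        ← Finset.mul_sum]
    rw [expand]
    have hvx' : ρ * (∑ i, v i * x i) ≤ 2 * s * a := by
      have := mul_le_mul_of_nonneg_left hvx hρ.le
      rwa [← mul_assoc, hsr] at this
    have hqsb : q * s * b = s * a := by rw [mul_comm q s, mul_assoc, hq]
    have hsb : s^2 * b^2 = ρ/2 * (∑ i, (v i)^2) := by rw [hs2, hb2]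
    nlinarith [sq_nonneg (q - s * b), hqsb, hsb, hvx']
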